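/- Let h : ℝ^m → ℝ^n with m > 1. If the restriction of h to every 2-dimensional affine plane E ⊆ ℝ^m is a similarity map, and h is distance equality preserving, then h itself is a similarity map. -/
import Mathlib


theorem similarity_on_planes_implies_similarity (m n : ℕ) (hm : 1 < m)
    (h : EuclideanSpace ℝ (Fin m) → EuclideanSpace ℝ (Fin n))
    (hplane : ∀ E : AffineSubspace ℝ (EuclideanSpace ℝ (Fin m)),
      Module.finrank ℝ E.direction = 2 →
      ∃ lam : ℝ, 0 < lam ∧ ∀ x ∈ E, ∀ y ∈ E, ‖h x - h y‖ = lam * ‖x - y‖)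
    (hh : ∀ x y z w, ‖x - y‖ = ‖z - w‖ → ‖h x - h y‖ = ‖h z - h w‖) :
    ∃ lam : ℝ, 0 < lam ∧ ∀ x y, ‖h x - h y‖ = lam * ‖x - y‖ := by
  classical
  set b := EuclideanSpace.basisFun (Fin m) ℝ
  set f : Fin 2 → EuclideanSpace ℝ (Fin m) := fun j => b (Fin.castLE hm j)
  have hli : LinearIndependent ℝ f := by
    exact b.toBasis.linearIndependent.comp _ (Fin.castLE_injective hm)
  set V : Submodule ℝ (EuclideanSpace ℝ (Fin m)) := Submodule.span ℝ (Set.range f)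
  have hdim : Module.finrank ℝ V = 2 := by
    simpa using finrank_span_eq_card hli
  set E : AffineSubspace ℝ (EuclideanSpace ℝ (Fin m)) := V.toAffineSubspace
  have hEdir : Module.finrank ℝ E.direction = 2 := by
    rw [show E.direction = V from Submodule.toAffineSubspace_direction V]
    exact hdim
  obtain ⟨lam, hlam, hsim⟩ := hplane E hEdir
  refine ⟨lam, hlam, fun x y => ?_⟩
  set r := ‖x - y‖ with hr
  have hf0 : f 0 ∈ V := Submodule.subset_span ⟨0, rfl⟩
  have hv : r • f 0 ∈ V := V.smul_mem r hf0
  have h0 : (0 : EuclideanSpace ℝ (Fin m)) ∈ V := V.zero_mem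
  have hnf0 : ‖f 0‖ = 1 := by
    simp [f, b, EuclideanSpace.basisFun_apply, EuclideanSpace.norm_single]
  have hnorm : ‖r • f 0 - 0‖ = r := by
    rw [sub_zero, norm_smul, hnf0, mul_one, Real.norm_eq_abs,
      abs_of_nonneg (norm_nonneg _)]
  have key := hh x y (r • f 0) 0 hnorm.symm
  rw [key, hsim _ hv _ h0, hnorm]
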